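/- Let F : ℝ^n → ℝ^n and φ : ℝ^n → ℝ be positive, one-homogeneous, and order-preserving on entrywise positive vectors, let y ∈ ℝ^n be entrywise positive, let C > 0 satisfy F(f) ≤ C·y entrywise for all entrywise positive f with φ(f) = 1, and set G(f) = F(f) + y and δ = 1/C. Then for all entrywise positive u ≠ v with φ(u) = φ(v) = 1, the Hilbert distance d(u,v) = log(M(u/v)/m(u/v)) satisfies d(G(u), G(v)) ≤ (M(u/v)/(M(u/v) + δ))·d(u,v) < d(u,v); in particular, the normalized map f ↦ G(f)/φ(G(f)) is a strict contraction of the Hilbert distance on the slice {f entrywise positive : φ(f) = 1}. -/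

import Mathlib

set_option maxHeartbeats 1000000


/-- The Hilbert (projective) distance between two entrywise positive vectors:
`d(u,v) = log(M(u/v)/m(u/v))` with `M(u/v) = max_i u_i/v_i`, `m(u/v) = min_i u_i/v_i`. -/
noncomputable def hilbertDist (n : ℕ) (hn : 0 < n) (u v : Fin n → ℝ) : ℝ :=
  Real.log
    ((Finset.univ.sup' (Finset.univ_nonempty_iff.mpr (Fin.pos_iff_nonempty.mp hn))
        (fun i => u i / v i)) /
     (Finset.univ.inf' (Finset.univ_nonempty_iff.mpr (Fin.pos_iff_nonempty.mp hn))
        (fun i => u i / v i)))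

private lemma key_log_ineq (A B : ℝ) (hB : 0 < B) (hBA : B ≤ A) :
    (A + 1) * (Real.log (A + 1) - Real.log (B + 1)) ≤ A * (Real.log A - Real.log B) := by
  have hA : 0 < A := lt_of_lt_of_le hB hBA
  set f : ℝ → ℝ := fun x => A * Real.log x - (A + 1) * Real.log (x + 1) with hf
  have hderiv : ∀ x : ℝ, 0 < x → HasDerivAt f (A * x⁻¹ - (A + 1) * (x + 1)⁻¹) x := by
    intro x hx0
    have h1 : HasDerivAt (fun x => Real.log x) x⁻¹ x := Real.hasDerivAt_log (ne_of_gt hx0)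
    have h2 : HasDerivAt (fun x : ℝ => x + 1) 1 x := (hasDerivAt_id x).add_const 1
    have h3 : HasDerivAt (fun x : ℝ => Real.log (x + 1)) ((x + 1)⁻¹ * 1) x :=
      (Real.hasDerivAt_log (by positivity)).comp x h2
    simpa [hf, mul_one, Pi.sub_def] using (h1.const_mul A).sub (h3.const_mul (A + 1))
  have hmono : MonotoneOn f (Set.Icc B A) := by
    apply monotoneOn_of_deriv_nonneg (convex_Icc B A)
    · intro x hx
      exact (hderiv x (lt_of_lt_of_le hB hx.1)).continuousAt.continuousWithinAt
    · intro x hx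
      rw [interior_Icc] at hx
      exact (hderiv x (lt_trans hB hx.1)).differentiableAt.differentiableWithinAt
    · intro x hx
      rw [interior_Icc] at hx
      have hx0 : 0 < x := lt_trans hB hx.1
      rw [(hderiv x hx0).deriv, sub_nonneg, inv_eq_one_div, inv_eq_one_div,
        mul_one_div, mul_one_div, div_le_div_iff₀ (by positivity) (by positivity)]
      nlinarith [hx.2.le]
  have hfe : f B ≤ f A :=
    hmono ⟨le_refl B, hBA⟩ ⟨hBA, le_refl A⟩ hBA
  simp only [hf] at hfe
  linarith

private lemma sup'_const_mul {n : ℕ} (ne : (Finset.univ : Finset (Fin n)).Nonempty)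
    (k : ℝ) (hk : 0 ≤ k) (f : Fin n → ℝ) :
    Finset.univ.sup' ne (fun i => k * f i) = k * Finset.univ.sup' ne f := by
  have h := Finset.comp_sup'_eq_sup'_comp ne (f := f) (fun x => k * x)
    (fun x y => mul_max_of_nonneg x y hk)
  simpa [Function.comp] using h.symm

private lemma inf'_const_mul {n : ℕ} (ne : (Finset.univ : Finset (Fin n)).Nonempty)
    (k : ℝ) (hk : 0 ≤ k) (f : Fin n → ℝ) :
    Finset.univ.inf' ne (fun i => k * f i) = k * Finset.univ.inf' ne f := by
  have h := Finset.apply_inf'_eq_inf'_comp ne (f := f) (fun x => k * x)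
    (fun x y => mul_min_of_nonneg x y hk)
  simpa [Function.comp] using h.symm

/-- **Lemma (the shifted map is a strict Hilbert-metric contraction).**
If `F`, `φ` are positive, one-homogeneous and order-preserving on entrywise positive
vectors, `y` is entrywise positive, `F(f) ≤ C·y` on the slice `{f > 0 : φ(f) = 1}`,
`G(f) = F(f) + y` and `δ = 1/C`, then for entrywise positive `u ≠ v` on the slice,
`d(G(u), G(v)) ≤ (M(u/v)/(M(u/v) + δ))·d(u,v) < d(u,v)`; in particular the
normalized map `f ↦ G(f)/φ(G(f))` strictly contracts the Hilbert distance on the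
slice. -/
theorem shifted_map_hilbert_contraction
    (n : ℕ) (hn : 0 < n)
    (F : (Fin n → ℝ) → (Fin n → ℝ)) (φ : (Fin n → ℝ) → ℝ)
    (hFpos : ∀ f : Fin n → ℝ, (∀ i, 0 < f i) → ∀ i, 0 < F f i)
    (hφpos : ∀ f : Fin n → ℝ, (∀ i, 0 < f i) → 0 < φ f)
    (hFhom : ∀ c : ℝ, 0 < c → ∀ f : Fin n → ℝ, (∀ i, 0 < f i) → F (c • f) = c • F f)
    (hφhom : ∀ c : ℝ, 0 < c → ∀ f : Fin n → ℝ, (∀ i, 0 < f i) → φ (c • f) = c * φ f)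
    (hFmono : ∀ u v : Fin n → ℝ, (∀ i, 0 < u i) → (∀ i, 0 < v i) →
      (∀ i, u i ≤ v i) → ∀ i, F u i ≤ F v i)
    (hφmono : ∀ u v : Fin n → ℝ, (∀ i, 0 < u i) → (∀ i, 0 < v i) →
      (∀ i, u i ≤ v i) → φ u ≤ φ v)
    (y : Fin n → ℝ) (hy : ∀ i, 0 < y i)
    (C : ℝ) (hC : 0 < C)
    (hbound : ∀ f : Fin n → ℝ, (∀ i, 0 < f i) → φ f = 1 → ∀ i, F f i ≤ C * y i)
    (G : (Fin n → ℝ) → (Fin n → ℝ)) (hG : ∀ f, G f = F f + y)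
    (u v : Fin n → ℝ) (hu : ∀ i, 0 < u i) (hv : ∀ i, 0 < v i)
    (hφu : φ u = 1) (hφv : φ v = 1) (huv : u ≠ v) :
    hilbertDist n hn (G u) (G v)
      ≤ (Finset.univ.sup' (Finset.univ_nonempty_iff.mpr (Fin.pos_iff_nonempty.mp hn))
            (fun i => u i / v i) /
          (Finset.univ.sup' (Finset.univ_nonempty_iff.mpr (Fin.pos_iff_nonempty.mp hn))
            (fun i => u i / v i) + 1 / C)) * hilbertDist n hn u v ∧
    hilbertDist n hn (G u) (G v) < hilbertDist n hn u v ∧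
    hilbertDist n hn ((φ (G u))⁻¹ • G u) ((φ (G v))⁻¹ • G v) < hilbertDist n hn u v := by
  have ne : (Finset.univ : Finset (Fin n)).Nonempty :=
    Finset.univ_nonempty_iff.mpr (Fin.pos_iff_nonempty.mp hn)
  set Mx := Finset.univ.sup' (Finset.univ_nonempty_iff.mpr (Fin.pos_iff_nonempty.mp hn))
    (fun i => u i / v i) with hMxdef
  set mx := Finset.univ.inf' (Finset.univ_nonempty_iff.mpr (Fin.pos_iff_nonempty.mp hn))
    (fun i => u i / v i) with hmxdef
  obtain ⟨i0, _⟩ := ne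
  have hmpos : 0 < mx := by
    rw [hmxdef]
    exact (Finset.lt_inf'_iff _).mpr (fun i _ => div_pos (hu i) (hv i))
  have hmM : mx ≤ Mx := by
    rw [hmxdef, hMxdef]
    exact le_trans (Finset.inf'_le _ (Finset.mem_univ i0))
      (Finset.le_sup' (fun i => u i / v i) (Finset.mem_univ i0))
  have hMpos : 0 < Mx := lt_of_lt_of_le hmpos hmM
  -- entrywise bounds
  have hub : ∀ i, u i ≤ Mx * v i := by
    intro i
    rw [hMxdef]
    exact (div_le_iff₀ (hv i)).mp (Finset.le_sup' (fun i => u i / v i) (Finset.mem_univ i))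
  have hlb : ∀ i, mx * v i ≤ u i := by
    intro i
    rw [hmxdef]
    exact (le_div_iff₀ (hv i)).mp (Finset.inf'_le _ (Finset.mem_univ i))
  have hMvpos : ∀ i, 0 < (Mx • v) i := fun i => by
    simp only [Pi.smul_apply, smul_eq_mul]; exact mul_pos hMpos (hv i)
  have hmvpos : ∀ i, 0 < (mx • v) i := fun i => by
    simp only [Pi.smul_apply, smul_eq_mul]; exact mul_pos hmpos (hv i)
  have hM1 : 1 ≤ Mx := by
    have h1 : φ u ≤ φ (Mx • v) := hφmono u (Mx • v) hu hMvpos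
      (fun i => by simpa [Pi.smul_apply, smul_eq_mul] using hub i)
    rw [hφu, hφhom Mx hMpos v hv, hφv, mul_one] at h1
    exact h1
  have hm1 : mx ≤ 1 := by
    have h1 : φ (mx • v) ≤ φ u := hφmono (mx • v) u hmvpos hu
      (fun i => by simpa [Pi.smul_apply, smul_eq_mul] using hlb i)
    rw [hφu, hφhom mx hmpos v hv, hφv, mul_one] at h1
    exact h1
  have hmMlt : mx < Mx := by
    rcases lt_or_eq_of_le hmM with h | h
    · exact h
    · exfalso
      have huv' : u = v := by
        have hMx1 : Mx = 1 := by
          have : φ u = φ (Mx • v) := by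
            congr 1
            funext i
            have h1 : u i / v i ≤ Mx := hMxdef ▸ Finset.le_sup' (fun i => u i / v i) (Finset.mem_univ i)
            have h2 : Mx ≤ u i / v i := h ▸ (hmxdef ▸ Finset.inf'_le (fun i => u i / v i) (Finset.mem_univ i) : mx ≤ u i / v i)
            have : u i / v i = Mx := le_antisymm h1 h2
            simp only [Pi.smul_apply, smul_eq_mul]
            rw [← this, div_mul_cancel₀ _ (ne_of_gt (hv i))]
          rw [hφu, hφhom Mx hMpos v hv, hφv, mul_one] at this
          exact this.symm
        funext i
        have h1 : u i / v i ≤ Mx := hMxdef ▸ Finset.le_sup' (fun i => u i / v i) (Finset.mem_univ i)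
        have h2 : Mx ≤ u i / v i := h ▸ (hmxdef ▸ Finset.inf'_le (fun i => u i / v i) (Finset.mem_univ i) : mx ≤ u i / v i)
        have heq : u i / v i = Mx := le_antisymm h1 h2
        rw [hMx1, div_eq_one_iff_eq (ne_of_gt (hv i))] at heq
        exact heq
      exact huv huv'
  -- positivity of G
  have hGpos : ∀ f : Fin n → ℝ, (∀ i, 0 < f i) → ∀ i, 0 < G f i := by
    intro f hf i
    rw [hG]
    exact add_pos (hFpos f hf i) (hy i)
  have hGu := hGpos u hu
  have hGv := hGpos v hv
  -- contraction bounds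
  set K := (Mx * C + 1) / (C + 1) with hKdef
  set k := (mx * C + 1) / (C + 1) with hkdef
  have hkpos : 0 < k := by rw [hkdef]; positivity
  have hKpos : 0 < K := by rw [hKdef]; positivity
  have hupper : ∀ i, G u i ≤ K * G v i := by
    intro i
    have hF1 : F u i ≤ F (Mx • v) i := hFmono u (Mx • v) hu hMvpos
      (fun j => by simpa [Pi.smul_apply, smul_eq_mul] using hub j) i
    have hF2 : F (Mx • v) i = Mx * F v i := by
      rw [hFhom Mx hMpos v hv]; simp [smul_eq_mul]
    have hb := hbound v hv hφv i
    have hFv := hFpos v hv i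
    rw [hG, hG]
    simp only [Pi.add_apply]
    rw [hKdef, div_mul_eq_mul_div, le_div_iff₀ (by positivity : (0:ℝ) < C + 1)]
    nlinarith [mul_nonneg (sub_nonneg.mpr hM1) (sub_nonneg.mpr hb), hy i]
  have hlower : ∀ i, k * G v i ≤ G u i := by
    intro i
    have hF1 : F (mx • v) i ≤ F u i := hFmono (mx • v) u hmvpos hu
      (fun j => by simpa [Pi.smul_apply, smul_eq_mul] using hlb j) i
    have hF2 : F (mx • v) i = mx * F v i := by
      rw [hFhom mx hmpos v hv]; simp [smul_eq_mul]
    have hb := hbound v hv hφv i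
    have hFv := hFpos v hv i
    rw [hG, hG]
    simp only [Pi.add_apply]
    rw [hkdef, div_mul_eq_mul_div, div_le_iff₀ (by positivity : (0:ℝ) < C + 1)]
    nlinarith [mul_nonneg (sub_nonneg.mpr hm1) (sub_nonneg.mpr hb), hy i]
  -- ratios of G
  set S := Finset.univ.sup' (Finset.univ_nonempty_iff.mpr (Fin.pos_iff_nonempty.mp hn))
    (fun i => G u i / G v i) with hSdef
  set I := Finset.univ.inf' (Finset.univ_nonempty_iff.mpr (Fin.pos_iff_nonempty.mp hn))
    (fun i => G u i / G v i) with hIdef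
  have hSK : S ≤ K := by
    rw [hSdef]
    exact Finset.sup'_le _ _ (fun i _ => (div_le_iff₀ (hGv i)).mpr (hupper i))
  have hkI : k ≤ I := by
    rw [hIdef]
    exact Finset.le_inf' _ _ (fun i _ => (le_div_iff₀ (hGv i)).mpr (hlower i))
  have hIpos : 0 < I := lt_of_lt_of_le hkpos hkI
  have hSpos : 0 < S := by
    rw [hSdef]
    exact lt_of_lt_of_le (div_pos (hGu i0) (hGv i0)) (Finset.le_sup' (fun i => G u i / G v i) (Finset.mem_univ i0))
  -- the main log estimate
  set A := Mx * C with hAdef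
  set B := mx * C with hBdef
  have hApos : 0 < A := by rw [hAdef]; positivity
  have hBpos : 0 < B := by rw [hBdef]; positivity
  have hBA : B ≤ A := by
    rw [hAdef, hBdef]
    exact mul_le_mul_of_nonneg_right hmM hC.le
  have hKk : K / k = (A + 1) / (B + 1) := by
    rw [hKdef, hkdef, div_div_div_comm, div_self (by positivity : (C:ℝ) + 1 ≠ 0), div_one,
      hAdef, hBdef]
  have key := key_log_ineq A B hBpos hBA
  have hlogAB : Real.log A - Real.log B = Real.log Mx - Real.log mx := by
    rw [hAdef, hBdef, Real.log_mul (ne_of_gt hMpos) (ne_of_gt hC),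
      Real.log_mul (ne_of_gt hmpos) (ne_of_gt hC)]
    ring
  have hfac : Mx / (Mx + 1 / C) = A / (A + 1) := by
    rw [hAdef, div_eq_div_iff (by positivity) (by positivity)]
    field_simp
  have hduv : hilbertDist n hn u v = Real.log Mx - Real.log mx := by
    unfold hilbertDist
    rw [← hMxdef, ← hmxdef, Real.log_div (ne_of_gt hMpos) (ne_of_gt hmpos)]
  have hduv_pos : 0 < hilbertDist n hn u v := by
    rw [hduv, sub_pos]
    exact Real.log_lt_log hmpos hmMlt
  have hdG : hilbertDist n hn (G u) (G v) = Real.log (S / I) := by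
    unfold hilbertDist
    rw [← hSdef, ← hIdef]
  have hfirst : hilbertDist n hn (G u) (G v) ≤ Mx / (Mx + 1 / C) * hilbertDist n hn u v := by
    rw [hdG, hduv, hfac]
    have h1 : Real.log (S / I) ≤ Real.log (K / k) :=
      Real.log_le_log (by positivity) (div_le_div₀ hKpos.le hSK hkpos hkI)
    have h2 : Real.log (K / k) = Real.log (A + 1) - Real.log (B + 1) := by
      rw [hKk, Real.log_div (by positivity) (by positivity)]
    have h3 : Real.log (A + 1) - Real.log (B + 1)
        ≤ A / (A + 1) * (Real.log Mx - Real.log mx) := by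
      rw [div_mul_eq_mul_div, le_div_iff₀ (by positivity : (0:ℝ) < A + 1), ← hlogAB]
      nlinarith [key]
    linarith
  have hfaclt : Mx / (Mx + 1 / C) < 1 := by
    rw [div_lt_one (by positivity)]
    have : 0 < 1 / C := by positivity
    linarith
  have hsecond : hilbertDist n hn (G u) (G v) < hilbertDist n hn u v := by
    calc hilbertDist n hn (G u) (G v) ≤ Mx / (Mx + 1 / C) * hilbertDist n hn u v := hfirst
      _ < 1 * hilbertDist n hn u v := by
          exact mul_lt_mul_of_pos_right hfaclt hduv_pos
      _ = hilbertDist n hn u v := one_mul _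
  refine ⟨hfirst, hsecond, ?_⟩
  -- scale invariance
  have hcu : 0 < (φ (G u))⁻¹ := inv_pos.mpr (hφpos (G u) hGu)
  have hcv : 0 < (φ (G v))⁻¹ := inv_pos.mpr (hφpos (G v) hGv)
  set cu := (φ (G u))⁻¹
  set cv := (φ (G v))⁻¹
  have hratio : (fun i => (cu • G u) i / (cv • G v) i)
      = fun i => (cu / cv) * (G u i / G v i) := by
    funext i
    simp only [Pi.smul_apply, smul_eq_mul]
    rw [mul_div_mul_comm]
  have hscale : hilbertDist n hn (cu • G u) (cv • G v) = hilbertDist n hn (G u) (G v) := by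
    unfold hilbertDist
    rw [hratio]
    rw [sup'_const_mul _ (cu / cv) (by positivity) _, inf'_const_mul _ (cu / cv) (by positivity) _]
    rw [mul_div_mul_left _ _ (by positivity : cu / cv ≠ 0)]
  rw [hscale]
  exact hsecond
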